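/- The optimality (KKT) matrix 𝒜 = [[M, 0, Aᵀ], [0, αM, −Mᵀ], [A, −M, 0]] is invertible whenever M is symmetric positive definite, A is invertible, and α > 0. -/

import Mathlib

open Matrix

/-- The KKT (optimality system) block matrix
`𝒜 = [[M, 0, Aᵀ], [0, αM, −Mᵀ], [A, −M, 0]]`. -/
def kktMatrix (n : ℕ) (M A : Matrix (Fin n) (Fin n) ℝ) (α : ℝ) :
    Matrix (Fin n ⊕ (Fin n ⊕ Fin n)) (Fin n ⊕ (Fin n ⊕ Fin n)) ℝ :=
  Matrix.fromBlocks M (Matrix.fromCols 0 A.transpose)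
    (Matrix.fromRows 0 A)
    (Matrix.fromBlocks (α • M) (-M.transpose) (-M) 0)

/-- The KKT matrix is invertible whenever `M` is symmetric positive definite,
`A` is invertible, and `α > 0`. -/
theorem kktMatrix_isUnit (n : ℕ) (M A : Matrix (Fin n) (Fin n) ℝ) (α : ℝ)
    (hM : M.PosDef) (hA : IsUnit A) (hα : 0 < α) :
    IsUnit (kktMatrix n M A α) := by
  rw [← Matrix.mulVec_injective_iff_isUnit]
  have key : ∀ v, kktMatrix n M A α *ᵥ v = 0 → v = 0 := by
    intro v hv
    set x : Fin n → ℝ := fun i => v (Sum.inl i) with hxdef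
    set y : Fin n → ℝ := fun i => v (Sum.inr (Sum.inl i)) with hydef
    set z : Fin n → ℝ := fun i => v (Sum.inr (Sum.inr i)) with hzdef
    have hv' : v = Sum.elim x (Sum.elim y z) := by
      funext i; rcases i with i | i | i <;> rfl
    rw [hv'] at hv
    simp only [kktMatrix, fromBlocks_mulVec, Sum.elim_comp_inl, Sum.elim_comp_inr,
      fromCols_mulVec_sumElim, fromRows_mulVec] at hv
    have hMt : Mᵀ = M := hM.1
    have E1 : M *ᵥ x + Aᵀ *ᵥ z = 0 := by
      funext i
      have := congrFun hv (Sum.inl i)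
      simpa using this
    have E2 : (α • M) *ᵥ y - Mᵀ *ᵥ z = 0 := by
      funext i
      have := congrFun hv (Sum.inr (Sum.inl i))
      simp only [Sum.elim_inr, Sum.elim_inl, Pi.add_apply, Pi.zero_apply,
        neg_mulVec, Pi.neg_apply, zero_mulVec, zero_add] at this
      simpa [sub_eq_add_neg] using this
    have E3 : A *ᵥ x - M *ᵥ y = 0 := by
      funext i
      have := congrFun hv (Sum.inr (Sum.inr i))
      simp only [Sum.elim_inr, Pi.add_apply, Pi.zero_apply,
        neg_mulVec, Pi.neg_apply, zero_mulVec, add_zero] at this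
      simpa [sub_eq_add_neg] using this
    have hAx : A *ᵥ x = M *ᵥ y := sub_eq_zero.mp E3
    have d1 : x ⬝ᵥ (M *ᵥ x) + (M *ᵥ y) ⬝ᵥ z = 0 := by
      have h := congrArg (fun w => x ⬝ᵥ w) E1
      have hxt : x ⬝ᵥ (Aᵀ *ᵥ z) = (M *ᵥ y) ⬝ᵥ z := by
        rw [dotProduct_mulVec, vecMul_transpose, hAx]
      simpa [dotProduct_add, hxt] using h
    have d2 : α * (y ⬝ᵥ (M *ᵥ y)) - (M *ᵥ y) ⬝ᵥ z = 0 := by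
      have h := congrArg (fun w => y ⬝ᵥ w) E2
      have hyt : y ⬝ᵥ (Mᵀ *ᵥ z) = (M *ᵥ y) ⬝ᵥ z := by
        rw [dotProduct_mulVec, ← hMt, vecMul_transpose, hMt]
      simpa [dotProduct_sub, hyt, smul_mulVec, dotProduct_smul,
        smul_eq_mul, sub_eq_zero] using h
    have hx0 : x = 0 := by
      by_contra h
      have h1 : 0 < x ⬝ᵥ (M *ᵥ x) := by simpa using hM.dotProduct_mulVec_pos h
      have h2 : 0 ≤ y ⬝ᵥ (M *ᵥ y) := by
        rcases eq_or_ne y 0 with hy0 | hy0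
        · simp [hy0]
        · exact le_of_lt (by simpa using hM.dotProduct_mulVec_pos hy0)
      nlinarith
    have hy0 : y = 0 := by
      by_contra h
      have h1 : 0 < y ⬝ᵥ (M *ᵥ y) := by simpa using hM.dotProduct_mulVec_pos h
      have h2 : 0 ≤ x ⬝ᵥ (M *ᵥ x) := by
        rcases eq_or_ne x 0 with hx0 | hx0
        · simp [hx0]
        · exact le_of_lt (by simpa using hM.dotProduct_mulVec_pos hx0)
      nlinarith
    have hz0 : z = 0 := by
      have hAz : Aᵀ *ᵥ z = 0 := by simpa [hx0] using E1
      have hAt : IsUnit Aᵀ := (Matrix.isUnit_transpose A).mpr hA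
      have hinj := Matrix.mulVec_injective_iff_isUnit.mpr hAt
      exact hinj (by simpa using hAz)
    funext i
    rcases i with i | i | i
    · exact congrFun hx0 i
    · exact congrFun hy0 i
    · exact congrFun hz0 i
  intro u w h
  have := key (u - w) (by rw [mulVec_sub, h, sub_self])
  exact sub_eq_zero.mp this
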